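/- Let M, N, σ₀, ε₀, ε₁ be real symmetric n×n matrices with σ₀ positive definite, and suppose βI ≤ M and βI ≤ N for some β > 0, and ε₁, M, N, σ₀⁻¹, ε₀ have operator norms bounded by a constant Λ. Then there exists δ > 0 depending only on β, Λ such that if ‖ε₁−ε₀‖ ≤ δ, the 2n×2n matrix C + D is positive definite, where C = [[M, Mε₁],[ε₁M, N+ε₁Mε₁]] and D = [[0, σ₀⁻¹(ε₁−ε₀)],[(ε₁−ε₀)σ₀⁻¹, (ε₁−ε₀)σ₀⁻¹ε₁ + ε₀σ₀⁻¹(ε₁−ε₀)]]. -/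

import Mathlib

open Matrix
open scoped Matrix.Norms.L2Operator

namespace CPlusDAux

variable {n : ℕ}

noncomputable def e (u : Fin n → ℝ) : EuclideanSpace ℝ (Fin n) :=
  (WithLp.equiv 2 (Fin n → ℝ)).symm u

lemma inner_e (u v : Fin n → ℝ) : (inner ℝ (e u) (e v) : ℝ) = u ⬝ᵥ v := by
  simp [e, PiLp.inner_apply, dotProduct, RCLike.inner_apply, mul_comm]

lemma norm_e_sq (u : Fin n → ℝ) : ‖e u‖ ^ 2 = u ⬝ᵥ u := by
  rw [← inner_e, real_inner_self_eq_norm_sq]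

lemma e_add (u v : Fin n → ℝ) : e (u + v) = e u + e v := rfl

lemma bound (A : Matrix (Fin n) (Fin n) ℝ) (u v : Fin n → ℝ) :
    |u ⬝ᵥ A *ᵥ v| ≤ ‖A‖ * ‖e u‖ * ‖e v‖ := by
  have h1 : u ⬝ᵥ A *ᵥ v = (inner ℝ (e u) (e (A *ᵥ v)) : ℝ) := (inner_e _ _).symm
  have h2 := abs_real_inner_le_norm (e u) (e (A *ᵥ v))
  have h3 : ‖e (A *ᵥ v)‖ ≤ ‖A‖ * ‖e v‖ := A.l2_opNorm_mulVec (e v)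
  rw [h1]
  calc |(inner ℝ (e u) (e (A *ᵥ v)) : ℝ)| ≤ ‖e u‖ * ‖e (A *ᵥ v)‖ := h2
    _ ≤ ‖e u‖ * (‖A‖ * ‖e v‖) :=
        mul_le_mul_of_nonneg_left h3 (norm_nonneg _)
    _ = ‖A‖ * ‖e u‖ * ‖e v‖ := by ring

lemma symm_dot (A : Matrix (Fin n) (Fin n) ℝ) (hA : A.IsSymm) (u v : Fin n → ℝ) :
    u ⬝ᵥ A *ᵥ v = (A *ᵥ u) ⬝ᵥ v := by
  rw [dotProduct_mulVec, ← mulVec_transpose, hA.eq]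

lemma quad_fromBlocks (A B C D : Matrix (Fin n) (Fin n) ℝ) (x y : Fin n → ℝ) :
    Sum.elim x y ⬝ᵥ (fromBlocks A B C D) *ᵥ Sum.elim x y
      = x ⬝ᵥ A *ᵥ x + x ⬝ᵥ B *ᵥ y + (y ⬝ᵥ C *ᵥ x + y ⬝ᵥ D *ᵥ y) := by
  rw [fromBlocks_mulVec]
  simp [Sum.elim_comp_inl, Sum.elim_comp_inr, dotProduct_add]


lemma aux_key1 (a b cz L : ℝ) (ha0 : 0 ≤ a) (hb0 : 0 ≤ b) (hcz0 : 0 ≤ cz)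
    (hL : 0 < L) (h : a ≤ cz + L * b) : a ^ 2 ≤ 2 * cz ^ 2 + 2 * L ^ 2 * b ^ 2 := by
  nlinarith [sq_nonneg (cz - L * b), mul_le_mul h h ha0
    (by positivity : (0:ℝ) ≤ cz + L * b)]

lemma aux_key2' (a b cz L : ℝ) (h1 : a ^ 2 ≤ 2 * cz ^ 2 + 2 * L ^ 2 * b ^ 2) :
    a ^ 2 + b ^ 2 ≤ 2 * (1 + L ^ 2) * (cz ^ 2 + b ^ 2) := by
  nlinarith [sq_nonneg b, sq_nonneg cz, sq_nonneg (L * cz)]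

lemma aux_key3 (a b d L : ℝ) (ha0 : 0 ≤ a) (hb0 : 0 ≤ b) (hd : 0 ≤ d) (hL : 0 < L) :
    L * d * a * b + L * d * b * a + L * d * L * b * b + L * L * d * b * b
      ≤ d * (L + 2 * L ^ 2) * (a ^ 2 + b ^ 2) := by
  have h2ab : 2 * (a * b) ≤ a ^ 2 + b ^ 2 := by nlinarith [sq_nonneg (a - b)]
  have hbb : b * b ≤ a ^ 2 + b ^ 2 := by nlinarith [sq_nonneg a]
  have hdL : 0 ≤ d * L := by positivity
  have hdL2 : 0 ≤ d * L ^ 2 := by positivity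
  nlinarith [mul_le_mul_of_nonneg_left h2ab hdL, mul_le_mul_of_nonneg_left hbb hdL2]

end CPlusDAux

open CPlusDAux

set_option maxHeartbeats 2000000 in
/-- Perturbation positivity: if `βI ≤ M`, `βI ≤ N`, all matrices have operator norms
bounded by `Λ`, then there is `δ > 0` depending only on `β, Λ` such that whenever
`‖ε₁ − ε₀‖ ≤ δ`, the matrix `C + D` is positive definite. -/
theorem C_plus_D_posDef (β Λ : ℝ) (hβ : 0 < β) :
    ∃ δ > 0, ∀ (n : ℕ) (M N σ₀ ε₀ ε₁ : Matrix (Fin n) (Fin n) ℝ),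
      M.IsSymm → N.IsSymm → ε₀.IsSymm → ε₁.IsSymm → σ₀.PosDef →
      (∀ x : Fin n → ℝ, β * (x ⬝ᵥ x) ≤ x ⬝ᵥ M.mulVec x) →
      (∀ x : Fin n → ℝ, β * (x ⬝ᵥ x) ≤ x ⬝ᵥ N.mulVec x) →
      ‖ε₁‖ ≤ Λ → ‖M‖ ≤ Λ → ‖N‖ ≤ Λ → ‖σ₀⁻¹‖ ≤ Λ → ‖ε₀‖ ≤ Λ →
      ‖ε₁ - ε₀‖ ≤ δ →
      (Matrix.fromBlocks M (M * ε₁) (ε₁ * M) (N + ε₁ * M * ε₁)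
        + Matrix.fromBlocks 0 (σ₀⁻¹ * (ε₁ - ε₀)) ((ε₁ - ε₀) * σ₀⁻¹)
            ((ε₁ - ε₀) * σ₀⁻¹ * ε₁ + ε₀ * σ₀⁻¹ * (ε₁ - ε₀))).PosDef := by
  set Λ' : ℝ := max Λ 1 with hΛ'def
  have hΛ1 : (1 : ℝ) ≤ Λ' := le_max_right _ _
  have hΛ0 : (0 : ℝ) < Λ' := lt_of_lt_of_le one_pos hΛ1
  set c : ℝ := β / (2 * (1 + Λ' ^ 2)) with hcdef
  have hcpos : 0 < c := by positivity
  set K : ℝ := Λ' + 2 * Λ' ^ 2 with hKdef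
  have hKpos : 0 < K := by positivity
  refine ⟨c / (2 * K), by positivity, ?_⟩
  intro n M N σ₀ ε₀ ε₁ hM hN hε₀ hε₁ hσ hMb hNb hε₁Λ hMΛ hNΛ hσΛ hε₀Λ hδE
  set δ : ℝ := c / (2 * K) with hδdef
  have hδpos : 0 < δ := by positivity
  -- norms bounded by Λ'
  have hε₁Λ' : ‖ε₁‖ ≤ Λ' := hε₁Λ.trans (le_max_left _ _)
  have hσΛ' : ‖σ₀⁻¹‖ ≤ Λ' := hσΛ.trans (le_max_left _ _)
  have hε₀Λ' : ‖ε₀‖ ≤ Λ' := hε₀Λ.trans (le_max_left _ _)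
  -- symmetry of σ₀⁻¹
  have hσt : σ₀ᵀ = σ₀ := by
    have := hσ.1
    rwa [Matrix.IsHermitian, conjTranspose_eq_transpose_of_trivial] at this
  have hσit : (σ₀⁻¹)ᵀ = σ₀⁻¹ := by rw [Matrix.transpose_nonsing_inv, hσt]
  refine Matrix.PosDef.of_dotProduct_mulVec_pos ?_ ?_
  · -- Hermitian
    rw [Matrix.IsHermitian, conjTranspose_eq_transpose_of_trivial, transpose_add,
      fromBlocks_transpose, fromBlocks_transpose]
    congr 1
    · simp only [transpose_mul, transpose_add, hM.eq, hN.eq, hε₁.eq]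
      congr 1
      noncomm_ring
    · simp only [transpose_mul, transpose_add, transpose_sub, transpose_zero,
        hM.eq, hN.eq, hε₀.eq, hε₁.eq, hσit]
      congr 1
      noncomm_ring
  · -- positivity
    intro X hX
    have hstar : star X = X := by
      funext i; simp
    rw [hstar]
    set x : Fin n → ℝ := X ∘ Sum.inl with hxdef
    set y : Fin n → ℝ := X ∘ Sum.inr with hydef
    have hXel : X = Sum.elim x y := by
      funext i; cases i <;> rfl
    set z : Fin n → ℝ := x + ε₁ *ᵥ y with hzdef
    set a : ℝ := ‖e x‖ with hadef
    set b : ℝ := ‖e y‖ with hbdef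
    set cz : ℝ := ‖e z‖ with hczdef
    have ha0 : 0 ≤ a := norm_nonneg _
    have hb0 : 0 ≤ b := norm_nonneg _
    have hcz0 : 0 ≤ cz := norm_nonneg _
    have fx : x ⬝ᵥ x = a ^ 2 := (norm_e_sq x).symm
    have fy : y ⬝ᵥ y = b ^ 2 := (norm_e_sq y).symm
    have fz : z ⬝ᵥ z = cz ^ 2 := (norm_e_sq z).symm
    -- a² + b² > 0
    have hab_pos : 0 < a ^ 2 + b ^ 2 := by
      rcases (not_and_or.mp (fun h : x = 0 ∧ y = 0 => hX (by
        rw [hXel, h.1, h.2]; funext i; cases i <;> rfl))) with h | h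
      · have : 0 < x ⬝ᵥ x :=
          lt_of_le_of_ne (Finset.sum_nonneg fun i _ => mul_self_nonneg _)
            (fun h0 => h (dotProduct_self_eq_zero.mp h0.symm))
        rw [fx] at this
        have := sq_nonneg b
        linarith
      · have : 0 < y ⬝ᵥ y :=
          lt_of_le_of_ne (Finset.sum_nonneg fun i _ => mul_self_nonneg _)
            (fun h0 => h (dotProduct_self_eq_zero.mp h0.symm))
        rw [fy] at this
        have := sq_nonneg a
        linarith
    -- a ≤ cz + Λ' b
    have ha_le : a ≤ cz + Λ' * b := by
      have hxe : e x = e z - e (ε₁ *ᵥ y) := by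
        rw [hzdef, e_add]; abel
      have h1 : ‖e x‖ ≤ ‖e z‖ + ‖e (ε₁ *ᵥ y)‖ := by
        rw [hxe]; exact norm_sub_le _ _
      have h2 : ‖e (ε₁ *ᵥ y)‖ ≤ ‖ε₁‖ * ‖e y‖ := ε₁.l2_opNorm_mulVec (e y)
      have h3 : ‖ε₁‖ * ‖e y‖ ≤ Λ' * b := mul_le_mul_of_nonneg_right hε₁Λ' hb0
      calc a ≤ cz + ‖e (ε₁ *ᵥ y)‖ := h1
        _ ≤ cz + Λ' * b := by linarith
    -- quadratic form of C
    have hQC : Sum.elim x y ⬝ᵥ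
        (fromBlocks M (M * ε₁) (ε₁ * M) (N + ε₁ * M * ε₁)) *ᵥ Sum.elim x y
          = z ⬝ᵥ M *ᵥ z + y ⬝ᵥ N *ᵥ y := by
      rw [quad_fromBlocks]
      have e1 : x ⬝ᵥ (M * ε₁) *ᵥ y = x ⬝ᵥ M *ᵥ (ε₁ *ᵥ y) := by
        rw [mulVec_mulVec]
      have e2 : y ⬝ᵥ (ε₁ * M) *ᵥ x = (ε₁ *ᵥ y) ⬝ᵥ M *ᵥ x := by
        rw [← mulVec_mulVec, symm_dot ε₁ hε₁]
      have e3 : y ⬝ᵥ (N + ε₁ * M * ε₁) *ᵥ y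
          = y ⬝ᵥ N *ᵥ y + (ε₁ *ᵥ y) ⬝ᵥ M *ᵥ (ε₁ *ᵥ y) := by
        rw [add_mulVec, dotProduct_add]
        congr 1
        rw [Matrix.mul_assoc, ← mulVec_mulVec, symm_dot ε₁ hε₁, mulVec_mulVec]
      have e4 : z ⬝ᵥ M *ᵥ z
          = x ⬝ᵥ M *ᵥ x + x ⬝ᵥ M *ᵥ (ε₁ *ᵥ y)
            + ((ε₁ *ᵥ y) ⬝ᵥ M *ᵥ x + (ε₁ *ᵥ y) ⬝ᵥ M *ᵥ (ε₁ *ᵥ y)) := by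
        rw [hzdef, mulVec_add, add_dotProduct, dotProduct_add, dotProduct_add]
        try ring
      rw [e1, e2, e3, e4]; ring
    -- bounds for D-part terms
    have hE : ‖ε₁ - ε₀‖ ≤ δ := hδE
    have hE0 : (0:ℝ) ≤ ‖ε₁ - ε₀‖ := norm_nonneg _
    have n1 : ‖σ₀⁻¹ * (ε₁ - ε₀)‖ ≤ Λ' * δ :=
      (Matrix.l2_opNorm_mul _ _).trans
        (mul_le_mul hσΛ' hE hE0 hΛ0.le)
    have n2 : ‖(ε₁ - ε₀) * σ₀⁻¹‖ ≤ Λ' * δ :=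
      (Matrix.l2_opNorm_mul _ _).trans (by
        rw [mul_comm (Λ') δ]
        exact mul_le_mul hE hσΛ' (norm_nonneg _) hδpos.le)
    have n3 : ‖(ε₁ - ε₀) * σ₀⁻¹ * ε₁‖ ≤ Λ' * δ * Λ' :=
      (Matrix.l2_opNorm_mul _ _).trans
        (mul_le_mul n2 hε₁Λ' (norm_nonneg _) (by positivity))
    have n4 : ‖ε₀ * σ₀⁻¹ * (ε₁ - ε₀)‖ ≤ Λ' * Λ' * δ := by
      refine (Matrix.l2_opNorm_mul _ _).trans
        (mul_le_mul ((Matrix.l2_opNorm_mul _ _).trans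
          (mul_le_mul hε₀Λ' hσΛ' (norm_nonneg _) hΛ0.le)) hE hE0 (by positivity))
    have t1 : -(Λ' * δ * a * b) ≤ x ⬝ᵥ (σ₀⁻¹ * (ε₁ - ε₀)) *ᵥ y := by
      have h := bound (σ₀⁻¹ * (ε₁ - ε₀)) x y
      have h2 : ‖σ₀⁻¹ * (ε₁ - ε₀)‖ * a * b ≤ Λ' * δ * a * b := by
        apply mul_le_mul_of_nonneg_right _ hb0
        exact mul_le_mul_of_nonneg_right n1 ha0
      have := neg_abs_le (x ⬝ᵥ (σ₀⁻¹ * (ε₁ - ε₀)) *ᵥ y)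
      linarith [abs_nonneg (x ⬝ᵥ (σ₀⁻¹ * (ε₁ - ε₀)) *ᵥ y)]
    have t2 : -(Λ' * δ * b * a) ≤ y ⬝ᵥ ((ε₁ - ε₀) * σ₀⁻¹) *ᵥ x := by
      have h := bound ((ε₁ - ε₀) * σ₀⁻¹) y x
      have h2 : ‖(ε₁ - ε₀) * σ₀⁻¹‖ * b * a ≤ Λ' * δ * b * a := by
        apply mul_le_mul_of_nonneg_right _ ha0
        exact mul_le_mul_of_nonneg_right n2 hb0
      have := neg_abs_le (y ⬝ᵥ ((ε₁ - ε₀) * σ₀⁻¹) *ᵥ x)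
      linarith
    have t3 : -(Λ' * δ * Λ' * b * b) ≤ y ⬝ᵥ ((ε₁ - ε₀) * σ₀⁻¹ * ε₁) *ᵥ y := by
      have h := bound ((ε₁ - ε₀) * σ₀⁻¹ * ε₁) y y
      have h2 : ‖(ε₁ - ε₀) * σ₀⁻¹ * ε₁‖ * b * b ≤ Λ' * δ * Λ' * b * b := by
        apply mul_le_mul_of_nonneg_right _ hb0
        exact mul_le_mul_of_nonneg_right n3 hb0
      have := neg_abs_le (y ⬝ᵥ ((ε₁ - ε₀) * σ₀⁻¹ * ε₁) *ᵥ y)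
      linarith
    have t4 : -(Λ' * Λ' * δ * b * b) ≤ y ⬝ᵥ (ε₀ * σ₀⁻¹ * (ε₁ - ε₀)) *ᵥ y := by
      have h := bound (ε₀ * σ₀⁻¹ * (ε₁ - ε₀)) y y
      have h2 : ‖ε₀ * σ₀⁻¹ * (ε₁ - ε₀)‖ * b * b ≤ Λ' * Λ' * δ * b * b := by
        apply mul_le_mul_of_nonneg_right _ hb0
        exact mul_le_mul_of_nonneg_right n4 hb0
      have := neg_abs_le (y ⬝ᵥ (ε₀ * σ₀⁻¹ * (ε₁ - ε₀)) *ᵥ y)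
      linarith
    -- quadratic form of D
    have hQD : Sum.elim x y ⬝ᵥ
        (fromBlocks 0 (σ₀⁻¹ * (ε₁ - ε₀)) ((ε₁ - ε₀) * σ₀⁻¹)
          ((ε₁ - ε₀) * σ₀⁻¹ * ε₁ + ε₀ * σ₀⁻¹ * (ε₁ - ε₀))) *ᵥ Sum.elim x y
        = x ⬝ᵥ (σ₀⁻¹ * (ε₁ - ε₀)) *ᵥ y + y ⬝ᵥ ((ε₁ - ε₀) * σ₀⁻¹) *ᵥ x
          + (y ⬝ᵥ ((ε₁ - ε₀) * σ₀⁻¹ * ε₁) *ᵥ y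
             + y ⬝ᵥ (ε₀ * σ₀⁻¹ * (ε₁ - ε₀)) *ᵥ y) := by
      rw [quad_fromBlocks]
      rw [add_mulVec, dotProduct_add]
      simp only [zero_mulVec, dotProduct_zero, zero_add]
      try ring
    -- total
    rw [hXel, add_mulVec, dotProduct_add, hQC, hQD]
    have hMz : β * cz ^ 2 ≤ z ⬝ᵥ M *ᵥ z := by
      have := hMb z; rwa [fz] at this
    have hNy : β * b ^ 2 ≤ y ⬝ᵥ N *ᵥ y := by
      have := hNb y; rwa [fy] at this
    -- arithmetic conclusion
    have key1 : a ^ 2 ≤ 2 * cz ^ 2 + 2 * Λ' ^ 2 * b ^ 2 :=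
      aux_key1 a b cz Λ' ha0 hb0 hcz0 hΛ0 ha_le
    have hcβ : c * (2 * (1 + Λ' ^ 2)) = β := by
      rw [hcdef]; field_simp
    have key2' : a ^ 2 + b ^ 2 ≤ 2 * (1 + Λ' ^ 2) * (cz ^ 2 + b ^ 2) :=
      aux_key2' a b cz Λ' key1
    have key2 : c * (a ^ 2 + b ^ 2) ≤ β * (cz ^ 2 + b ^ 2) := by
      calc c * (a ^ 2 + b ^ 2) ≤ c * (2 * (1 + Λ' ^ 2) * (cz ^ 2 + b ^ 2)) :=
            mul_le_mul_of_nonneg_left key2' hcpos.le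
        _ = c * (2 * (1 + Λ' ^ 2)) * (cz ^ 2 + b ^ 2) := by ring
        _ = β * (cz ^ 2 + b ^ 2) := by rw [hcβ]
    have hδK : δ * (2 * K) = c := by
      rw [hδdef]; field_simp
    have key3 : Λ' * δ * a * b + Λ' * δ * b * a + Λ' * δ * Λ' * b * b
        + Λ' * Λ' * δ * b * b ≤ δ * K * (a ^ 2 + b ^ 2) := by
      have h := aux_key3 a b δ Λ' ha0 hb0 hδpos.le hΛ0
      have hK' : δ * (Λ' + 2 * Λ' ^ 2) = δ * K := by rw [hKdef]
      calc Λ' * δ * a * b + Λ' * δ * b * a + Λ' * δ * Λ' * b * b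
          + Λ' * Λ' * δ * b * b
          = Λ' * δ * a * b + Λ' * δ * b * a + Λ' * δ * Λ' * b * b
            + Λ' * Λ' * δ * b * b := rfl
        _ ≤ δ * (Λ' + 2 * Λ' ^ 2) * (a ^ 2 + b ^ 2) := h
        _ = δ * K * (a ^ 2 + b ^ 2) := by rw [hK']
    have final : 0 < c / 2 * (a ^ 2 + b ^ 2) := by positivity
    have hδK2 : δ * K = c / 2 := by
      rw [hδdef]
      field_simp
    have hδKmul : δ * K * (a ^ 2 + b ^ 2) = c / 2 * (a ^ 2 + b ^ 2) := by
      rw [hδK2]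
    have hring : c * (a ^ 2 + b ^ 2) - c / 2 * (a ^ 2 + b ^ 2)
        = c / 2 * (a ^ 2 + b ^ 2) := by ring
    clear_value Λ' c K δ a b cz
    linarith [key2, key3, hMz, hNy, t1, t2, t3, t4, final, hδKmul, hring]
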